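/- The point y = (b, a, a, …, a) ∈ ℝ^d is at distance exactly √(b² + (d-1)a²) from the Engel set X(A,a,b,δ) when b > a > δ > 0; i.e., the empty-ball radius bound R = √(b² + (d-1)a²) for Engel sets is sharp. -/

import Mathlib

noncomputable section
open scoped Pointwise

/-- Euclidean d-space. -/
abbrev Euc (d : ℕ) : Type := EuclideanSpace ℝ (Fin d)

/-- The 1-based standard basis vector `e_k` of `ℝ^d` (for `1 ≤ k ≤ d`). -/
def eVec (d k : ℕ) : Euc d :=
  if h : k - 1 < d then EuclideanSpace.single ⟨k - 1, h⟩ (1 : ℝ) else 0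

/-- Conditions (A1)–(A3) on the doubly-infinite integer sequence `A`. -/
def EngelSeq (d : ℕ) (A : ℤ → ℤ) : Prop :=
  (∀ i : ℤ, 1 ≤ (A i).natAbs ∧ (A i).natAbs ≤ d - 1) ∧
  (∀ i : ℤ, (A (i + (d - 1))).natAbs = (A i).natAbs) ∧
  (∀ s : ℕ, 1 ≤ s → s ≤ d - 1 → ∃ i : ℤ, 1 ≤ i ∧ i ≤ d - 1 ∧ (A i).natAbs = s)

/-- The vector `u_i = sign(a_i) e_{|a_i|}`. -/
def engelU (d : ℕ) (A : ℤ → ℤ) (i : ℤ) : Euc d :=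
  (if 0 < A i then (1 : ℝ) else -1) • eVec d (A i).natAbs

/-- The cumulative sum `u_1 + ⋯ + u_i` (with the natural convention for `i ≤ 0`,
so that `engelCum 0 = 0` and `engelCum i - engelCum (i-1) = u_i` for all `i`). -/
def engelCum (d : ℕ) (A : ℤ → ℤ) (i : ℤ) : Euc d :=
  if 0 ≤ i then ∑ j ∈ Finset.range i.toNat, engelU d A ((j : ℤ) + 1)
  else -∑ j ∈ Finset.range (-i).toNat, engelU d A (-(j : ℤ))

/-- The translation vector placing layer `m` of an Engel set:
layer `m` lies at height `2bm`, and the horizontal shifts `δ·u_i` accumulate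
according to (E3), (E4). (Integer division is floor division.) -/
def engelOffset (d : ℕ) (A : ℤ → ℤ) (b δ : ℝ) (m : ℤ) : Euc d :=
  ((2 * b) * (m : ℝ)) • eVec d d + δ • engelCum d A (m / 2)

/-- The horizontal grid `Y = 2aℤ^{d-1} × {0}` in `ℝ^d`. -/
def engelGrid (d : ℕ) (a : ℝ) : Set (Euc d) :=
  {x | ∀ j : Fin d, ((j : ℕ) < d - 1 → ∃ m : ℤ, x j = 2 * a * (m : ℝ)) ∧
        ((j : ℕ) = d - 1 → x j = 0)}

/-- Layer `X_m` of the Engel set `X(A,a,b,δ)`. -/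
def engelLayer (d : ℕ) (A : ℤ → ℤ) (a b δ : ℝ) (m : ℤ) : Set (Euc d) :=
  engelOffset d A b δ m +ᵥ engelGrid d a

/-- The Engel set `X(A,a,b,δ) = ⋃_m X_m`. -/
def engelSet (d : ℕ) (A : ℤ → ℤ) (a b δ : ℝ) : Set (Euc d) :=
  ⋃ m : ℤ, engelLayer d A a b δ m

/-- A Delone set of type `(r,R)`: every open `r`-ball contains at most one point of `X`,
and every closed `R`-ball contains at least one point of `X`. -/
def IsDeloneSet {V : Type*} [MetricSpace V] (X : Set V) (r R : ℝ) : Prop :=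
  (∀ y : V, (X ∩ Metric.ball y r).Subsingleton) ∧
  (∀ y : V, (X ∩ Metric.closedBall y R).Nonempty)

/-- The ρ-cluster of `X` at `x`. -/
def cluster {V : Type*} [MetricSpace V] (X : Set V) (x : V) (ρ : ℝ) : Set V :=
  X ∩ Metric.closedBall x ρ

/-- Equivalence of the ρ-clusters of `X` at `x` and `x'`: an isometry of the ambient
space carries the one cluster onto the other, mapping center to center. -/
def ClustersEquiv {V : Type*} [MetricSpace V] (X : Set V) (x x' : V) (ρ : ℝ) : Prop :=
  ∃ g : V ≃ᵢ V, g x = x' ∧ g '' cluster X x ρ = cluster X x' ρ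

/-- A regular system: the symmetry group of `X` acts transitively on `X`. -/
def IsRegularSystem {V : Type*} [MetricSpace V] (X : Set V) : Prop :=
  ∀ x ∈ X, ∀ y ∈ X, ∃ g : V ≃ᵢ V, g '' X = X ∧ g x = y

/- ============ Auxiliary lemmas ============ -/

lemma eVec_apply {d k : ℕ} (hk1 : 1 ≤ k) (hkd : k ≤ d) (j : Fin d) :
    eVec d k j = if (j : ℕ) = k - 1 then 1 else 0 := by
  have h : k - 1 < d := by omega
  simp only [eVec, dif_pos h, EuclideanSpace.single_apply]
  congr 1
  simp [Fin.ext_iff]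

lemma euc_sum_apply {d : ℕ} {ι : Type*} (s : Finset ι) (f : ι → Euc d) (j : Fin d) :
    (∑ t ∈ s, f t) j = ∑ t ∈ s, f t j := by
  rw [WithLp.ofLp_sum]; exact Finset.sum_apply j s _

lemma sum_abs_engelU {d : ℕ} {A : ℤ → ℤ} (hA : EngelSeq d A) (i : ℤ) :
    ∑ j : Fin d, |engelU d A i j| = 1 := by
  obtain ⟨h1, h2⟩ := hA.1 i
  have hd : 2 ≤ d := by omega
  have hkd : (A i).natAbs ≤ d := by omega
  have hlt : (A i).natAbs - 1 < d := by omega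
  have key : ∀ j : Fin d,
      |engelU d A i j| = if j = (⟨(A i).natAbs - 1, hlt⟩ : Fin d) then 1 else 0 := by
    intro j
    have hcond : ((j : ℕ) = (A i).natAbs - 1) ↔ (j = (⟨(A i).natAbs - 1, hlt⟩ : Fin d)) :=
      ⟨fun h => Fin.ext h, fun h => by rw [h]⟩
    simp only [engelU, PiLp.smul_apply, smul_eq_mul, abs_mul, eVec_apply h1 hkd, hcond]
    split_ifs <;> norm_num
  rw [Finset.sum_congr rfl fun j _ => key j]
  simp

lemma sum_abs_engelCum {d : ℕ} {A : ℤ → ℤ} (hA : EngelSeq d A) (i : ℤ) :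
    ∑ j : Fin d, |engelCum d A i j| ≤ (i.natAbs : ℝ) := by
  unfold engelCum
  split_ifs with h
  · calc ∑ j : Fin d, |(∑ t ∈ Finset.range i.toNat, engelU d A ((t : ℤ) + 1)) j|
        = ∑ j : Fin d, |∑ t ∈ Finset.range i.toNat, engelU d A ((t : ℤ) + 1) j| := by
          simp only [euc_sum_apply]
      _ ≤ ∑ j : Fin d, ∑ t ∈ Finset.range i.toNat, |engelU d A ((t : ℤ) + 1) j| :=
          Finset.sum_le_sum fun j _ => Finset.abs_sum_le_sum_abs _ _
      _ = ∑ t ∈ Finset.range i.toNat, ∑ j : Fin d, |engelU d A ((t : ℤ) + 1) j| :=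
          Finset.sum_comm
      _ = ∑ t ∈ Finset.range i.toNat, (1 : ℝ) := by
          exact Finset.sum_congr rfl fun t _ => sum_abs_engelU hA _
      _ ≤ (i.natAbs : ℝ) := by
          simp only [Finset.sum_const, Finset.card_range, nsmul_eq_mul, mul_one]
          exact_mod_cast Nat.le_of_eq (by omega)
  · calc ∑ j : Fin d, |(-∑ t ∈ Finset.range (-i).toNat, engelU d A (-(t : ℤ))) j|
        = ∑ j : Fin d, |∑ t ∈ Finset.range (-i).toNat, engelU d A (-(t : ℤ)) j| := by
          simp only [PiLp.neg_apply, abs_neg, euc_sum_apply]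
      _ ≤ ∑ j : Fin d, ∑ t ∈ Finset.range (-i).toNat, |engelU d A (-(t : ℤ)) j| :=
          Finset.sum_le_sum fun j _ => Finset.abs_sum_le_sum_abs _ _
      _ = ∑ t ∈ Finset.range (-i).toNat, ∑ j : Fin d, |engelU d A (-(t : ℤ)) j| :=
          Finset.sum_comm
      _ = ∑ t ∈ Finset.range (-i).toNat, (1 : ℝ) := by
          exact Finset.sum_congr rfl fun t _ => sum_abs_engelU hA _
      _ ≤ (i.natAbs : ℝ) := by
          simp only [Finset.sum_const, Finset.card_range, nsmul_eq_mul, mul_one]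
          exact_mod_cast Nat.le_of_eq (by omega)

lemma engelU_last {d : ℕ} {A : ℤ → ℤ} (hA : EngelSeq d A) (i : ℤ) (j : Fin d)
    (hj : (j : ℕ) = d - 1) : engelU d A i j = 0 := by
  obtain ⟨h1, h2⟩ := hA.1 i
  have hd : 2 ≤ d := by omega
  simp only [engelU, PiLp.smul_apply, smul_eq_mul]
  have hne : ¬((j : ℕ) = (A i).natAbs - 1) := by omega
  rw [eVec_apply h1 (by omega), if_neg hne]
  ring

lemma engelCum_last {d : ℕ} {A : ℤ → ℤ} (hA : EngelSeq d A) (i : ℤ) (j : Fin d)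
    (hj : (j : ℕ) = d - 1) : engelCum d A i j = 0 := by
  unfold engelCum
  split_ifs with h
  · rw [euc_sum_apply]
    exact Finset.sum_eq_zero fun t _ => engelU_last hA _ j hj
  · rw [PiLp.neg_apply, euc_sum_apply]
    rw [Finset.sum_eq_zero fun t _ => engelU_last hA _ j hj]
    simp

lemma int_key (m : ℤ) : ((m / 2).natAbs : ℤ) ≤ 2 * m * (m - 1) := by
  rcases le_or_gt m 0 with h | h
  · have h1 : ((m / 2).natAbs : ℤ) ≤ -m := by omega
    nlinarith [mul_nonneg (neg_nonneg.mpr h) (by linarith : (0 : ℤ) ≤ 1 - 2 * m)]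
  · have h1 : ((m / 2).natAbs : ℤ) ≤ m - 1 := by omega
    nlinarith [mul_nonneg (by linarith : (0 : ℤ) ≤ m - 1) (by linarith : (0 : ℤ) ≤ 2 * m - 1)]

lemma sq_bound (a δ c : ℝ) (ha : 0 < a) (hδ : 0 < δ) (n : ℤ) :
    a ^ 2 - 2 * a * δ * |c| ≤ (a - (δ * c + 2 * a * n)) ^ 2 := by
  have h1 : a ≤ |a - 2 * a * (n : ℝ)| := by
    rcases le_or_gt n 0 with hn | hn
    · have hn' : (n : ℝ) ≤ 0 := by exact_mod_cast hn
      rw [abs_of_pos (by nlinarith)]; nlinarith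
    · have hn' : (1 : ℝ) ≤ (n : ℝ) := by exact_mod_cast hn
      rw [abs_of_nonpos (by nlinarith)]; nlinarith
  have h2 : |a - 2 * a * (n : ℝ)| - δ * |c| ≤ |a - (δ * c + 2 * a * n)| := by
    have h3 := abs_sub_abs_le_abs_sub (a - 2 * a * (n : ℝ)) (δ * c)
    have h4 : |δ * c| = δ * |c| := by rw [abs_mul, abs_of_pos hδ]
    have h5 : (a - 2 * a * (n : ℝ)) - δ * c = a - (δ * c + 2 * a * n) := by ring
    rw [h4, h5] at h3
    exact h3
  rcases le_or_gt (δ * |c|) a with hc | hc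
  · have h3 : a - δ * |c| ≤ |a - (δ * c + 2 * a * n)| := by linarith
    have h4 : (a - δ * |c|) ^ 2 ≤ (a - (δ * c + 2 * a * n)) ^ 2 := by
      rw [← sq_abs (a - (δ * c + 2 * a * n))]
      exact pow_le_pow_left₀ (by linarith) h3 2
    nlinarith [sq_nonneg (δ * |c|)]
  · nlinarith [sq_nonneg (a - (δ * c + 2 * a * n)), abs_nonneg c]

/-- the point `y = (a, …, a, b)` (with `d-1` coordinates equal to `a` and
last coordinate `b`), lying halfway between layers `X₀` and `X₁`, is at distance exactly
`√(b² + (d-1)a²)` from the Engel set: the empty-ball radius bound is sharp. -/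
theorem engelSet_R_sharp (d : ℕ) (hd : 2 ≤ d) (A : ℤ → ℤ) (hA : EngelSeq d A)
    (a b δ : ℝ) (hδ : 0 < δ) (hδa : δ < a) (hab : a < b)
    (y : Euc d) (hy : ∀ j : Fin d, y j = if (j : ℕ) = d - 1 then b else a) :
    Metric.infDist y (engelSet d A a b δ) = Real.sqrt (b ^ 2 + ((d : ℝ) - 1) * a ^ 2) := by
  have ha : 0 < a := lt_trans hδ hδa
  have hb : 0 < b := lt_trans ha hab
  have hlastlt : d - 1 < d := by omega
  set last : Fin d := ⟨d - 1, hlastlt⟩ with hlast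
  have hlastval : (last : ℕ) = d - 1 := rfl
  have hcard : (Finset.univ.erase last).card = d - 1 := by
    rw [Finset.card_erase_of_mem (Finset.mem_univ _)]
    simp
  -- 0 belongs to the Engel set
  have hoff0 : engelOffset d A b δ 0 = 0 := by
    simp [engelOffset, engelCum]
  have hg0 : (0 : Euc d) ∈ engelGrid d a := by
    intro j
    refine ⟨fun _ => ⟨0, by simp⟩, fun _ => rfl⟩
  have h0 : (0 : Euc d) ∈ engelSet d A a b δ := by
    refine Set.mem_iUnion.2 ⟨0, ?_⟩
    exact Set.mem_vadd_set.2 ⟨0, hg0, by simp [hoff0]⟩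
  -- the distance from y to 0
  have hsumy : ∑ j : Fin d, (y j) ^ 2 = b ^ 2 + ((d : ℝ) - 1) * a ^ 2 := by
    rw [← Finset.add_sum_erase _ _ (Finset.mem_univ last)]
    have h1 : y last = b := by rw [hy last, if_pos hlastval]
    have h2 : ∀ j ∈ Finset.univ.erase last, (y j) ^ 2 = a ^ 2 := by
      intro j hj
      have hne : j ≠ last := Finset.ne_of_mem_erase hj
      have : (j : ℕ) ≠ d - 1 := fun hc => hne (Fin.ext (by rw [hc, hlastval]))
      rw [hy j, if_neg this]
    rw [h1, Finset.sum_congr rfl h2, Finset.sum_const, hcard]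
    have : ((d - 1 : ℕ) : ℝ) = (d : ℝ) - 1 := by
      have : (1 : ℕ) ≤ d := by omega
      push_cast [this]; ring
    rw [nsmul_eq_mul, this]
  have hdist0 : dist y (0 : Euc d) = Real.sqrt (b ^ 2 + ((d : ℝ) - 1) * a ^ 2) := by
    rw [EuclideanSpace.dist_eq, ← hsumy]
    congr 1
    exact Finset.sum_congr rfl fun j _ => by
      rw [PiLp.zero_apply, Real.dist_eq, sq_abs, sub_zero]
  -- lower bound: every point of the set is far from y
  have hlower : ∀ x ∈ engelSet d A a b δ,
      Real.sqrt (b ^ 2 + ((d : ℝ) - 1) * a ^ 2) ≤ dist y x := by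
    intro x hx
    obtain ⟨m, hm⟩ := Set.mem_iUnion.1 hx
    obtain ⟨g, hg, hgx⟩ := Set.mem_vadd_set.1 hm
    have hxj : ∀ j : Fin d,
        x j = (2 * b) * (m : ℝ) * (eVec d d j) + δ * engelCum d A (m / 2) j + g j := by
      intro j
      rw [← hgx]
      show (engelOffset d A b δ m + g) j = _
      rw [PiLp.add_apply, engelOffset, PiLp.add_apply, PiLp.smul_apply, PiLp.smul_apply,
        smul_eq_mul, smul_eq_mul]
    -- last coordinate
    have hxlast : y last - x last = b - 2 * b * (m : ℝ) := by
      rw [hy last, if_pos hlastval, hxj last]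
      rw [eVec_apply (by omega : 1 ≤ d) le_rfl, if_pos hlastval,
        engelCum_last hA _ last hlastval, (hg last).2 hlastval]
      ring
    -- horizontal coordinates
    have hhoriz : ∀ j ∈ Finset.univ.erase last,
        a ^ 2 - 2 * a * δ * |engelCum d A (m / 2) j| ≤ (y j - x j) ^ 2 := by
      intro j hj
      have hne : j ≠ last := Finset.ne_of_mem_erase hj
      have hjne : (j : ℕ) ≠ d - 1 := fun hc => hne (Fin.ext (by rw [hc, hlastval]))
      have hjlt : (j : ℕ) < d - 1 := by have := j.isLt; omega
      obtain ⟨n, hn⟩ := (hg j).1 hjlt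
      have h1 : eVec d d j = 0 := by
        rw [eVec_apply (by omega : 1 ≤ d) le_rfl, if_neg hjne]
      have h2 : y j - x j = a - (δ * engelCum d A (m / 2) j + 2 * a * (n : ℝ)) := by
        rw [hy j, if_neg hjne, hxj j, h1, hn]; ring
      rw [h2]
      exact sq_bound a δ _ ha hδ n
    -- sum of |c_j| over horizontal coordinates
    have hS : ∑ j ∈ Finset.univ.erase last, |engelCum d A (m / 2) j|
        ≤ (((m / 2).natAbs : ℕ) : ℝ) := by
      refine le_trans (Finset.sum_le_sum_of_subset_of_nonneg (Finset.subset_univ _)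
        fun j _ _ => abs_nonneg _) (sum_abs_engelCum hA _)
    -- assemble
    rw [EuclideanSpace.dist_eq]
    apply Real.sqrt_le_sqrt
    have hrw : ∀ j : Fin d, dist (y j) (x j) ^ 2 = (y j - x j) ^ 2 := fun j => by
      rw [Real.dist_eq, sq_abs]
    rw [Finset.sum_congr rfl fun j _ => hrw j,
      ← Finset.add_sum_erase _ _ (Finset.mem_univ last)]
    set s : ℝ := (((m / 2).natAbs : ℕ) : ℝ) with hs
    have hs0 : 0 ≤ s := Nat.cast_nonneg _
    have hsum2 : ((d : ℝ) - 1) * a ^ 2 - 2 * a * δ * s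
        ≤ ∑ j ∈ Finset.univ.erase last, (y j - x j) ^ 2 := by
      refine le_trans ?_ (Finset.sum_le_sum hhoriz)
      rw [Finset.sum_sub_distrib, Finset.sum_const, hcard]
      have hcast : ((d - 1 : ℕ) : ℝ) = (d : ℝ) - 1 := by
        have h1 : (1 : ℕ) ≤ d := by omega
        push_cast [h1]; ring
      rw [nsmul_eq_mul, hcast]
      have := mul_le_mul_of_nonneg_left hS (by positivity : (0:ℝ) ≤ 2 * a * δ)
      rw [Finset.mul_sum] at this
      linarith
    have hvert : b ^ 2 + 2 * a * δ * s ≤ (y last - x last) ^ 2 := by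
      rw [hxlast]
      have hint : (((m / 2).natAbs : ℕ) : ℝ) ≤ 2 * (m : ℝ) * ((m : ℝ) - 1) := by
        have h2 : ((((m / 2).natAbs : ℤ)) : ℝ) ≤ (((2 * m * (m - 1) : ℤ)) : ℝ) := by
          exact_mod_cast int_key m
        have h3 : (((2 * m * (m - 1) : ℤ)) : ℝ) = 2 * (m : ℝ) * ((m : ℝ) - 1) := by
          push_cast; ring
        have h4 : ((((m / 2).natAbs : ℤ)) : ℝ) = (((m / 2).natAbs : ℕ) : ℝ) :=
          Int.cast_natCast _
        rw [h4, h3] at h2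
        exact h2
      have hmm : (0 : ℝ) ≤ (m : ℝ) * ((m : ℝ) - 1) := by
        have : (0 : ℤ) ≤ m * (m - 1) := by nlinarith [sq_nonneg (2 * m - 1)]
        exact_mod_cast this
      have hab2 : a * δ ≤ b ^ 2 := by nlinarith
      have e1 : 2 * b ^ 2 * s ≤ 2 * b ^ 2 * (2 * (m : ℝ) * ((m : ℝ) - 1)) := by
        have hb2 : (0 : ℝ) ≤ 2 * b ^ 2 := by positivity
        exact mul_le_mul_of_nonneg_left hint hb2
      have e2 : 2 * a * δ * s ≤ 2 * b ^ 2 * s := by nlinarith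
      nlinarith
    linarith
  -- conclusion
  refine le_antisymm (le_trans (Metric.infDist_le_dist_of_mem h0) (le_of_eq hdist0)) ?_
  by_contra hlt
  push_neg at hlt
  obtain ⟨x, hx, hxd⟩ := (Metric.infDist_lt_iff ⟨0, h0⟩).1 hlt
  exact absurd hxd (not_lt.2 (hlower x hx))
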